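/- Let F be a finite free module over a commutative ring R, let a ∈ F (so a has exterior degree 1), let γ be a homogeneous element of the exterior algebra of the dual F* and b a homogeneous element of the exterior algebra of F. Then (a ⌟ γ) ⌟ b = a ∧ (γ ⌟ b) + (−1)^(1+deg γ) · γ ⌟ (a ∧ b), where ⌟ denotes the natural contraction action of ⋀F* on ⋀F (and of ⋀F on ⋀F*). -/

import Mathlib

open ExteriorAlgebra

noncomputable def extMap (R : Type*) [CommRing R] {M N : Type*} [AddCommGroup M] [AddCommGroup N]
    [Module R M] [Module R N] (f : M →ₗ[R] N) :
    ExteriorAlgebra R M →ₐ[R] ExteriorAlgebra R N :=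
  ExteriorAlgebra.lift R ⟨(ExteriorAlgebra.ι R).comp f, fun m => by
    simp [ExteriorAlgebra.ι_sq_zero (f m)]⟩

noncomputable def extContract (R : Type*) [CommRing R] {M : Type*} [AddCommGroup M] [Module R M] :
    ExteriorAlgebra R (Module.Dual R M) →ₐ[R] Module.End R (ExteriorAlgebra R M) :=
  ExteriorAlgebra.lift R ⟨(CliffordAlgebra.contractLeft (Q := (0 : QuadraticForm R M)) :
      Module.Dual R M →ₗ[R] Module.End R (ExteriorAlgebra R M)), fun d => by
    refine LinearMap.ext fun x => ?_
    rw [Module.End.mul_apply, LinearMap.zero_apply]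
    exact CliffordAlgebra.contractLeft_contractLeft (Q := (0 : QuadraticForm R M)) (d := d) x⟩

noncomputable def extContractD (R : Type*) [CommRing R] {M : Type*} [AddCommGroup M] [Module R M] :
    ExteriorAlgebra R M →ₐ[R] Module.End R (ExteriorAlgebra R (Module.Dual R M)) :=
  ExteriorAlgebra.lift R ⟨(CliffordAlgebra.contractLeft
      (Q := (0 : QuadraticForm R (Module.Dual R M))) :
      Module.Dual R (Module.Dual R M) →ₗ[R] _).comp (Module.Dual.eval R M), fun m => by
    refine LinearMap.ext fun x => ?_
    rw [Module.End.mul_apply, LinearMap.zero_apply, LinearMap.comp_apply]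
    exact CliffordAlgebra.contractLeft_contractLeft
      (Q := (0 : QuadraticForm R (Module.Dual R M))) (d := Module.Dual.eval R M m) x⟩

def extDeg (R : Type*) [CommRing R] {M : Type*} [AddCommGroup M] [Module R M] (i : ℕ)
    (x : ExteriorAlgebra R M) : Prop :=
  x ∈ (LinearMap.range (ExteriorAlgebra.ι R : M →ₗ[R] ExteriorAlgebra R M)) ^ i

set_option maxHeartbeats 1600000 in
/-- Proposition 1.2(a): for `a ∈ F` (degree 1), `γ` a homogeneous element of `⋀ F*` of
degree `j`, and `b` a homogeneous element of `⋀ F`, one has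
`(a ⌟ γ) ⌟ b = a ∧ (γ ⌟ b) + (-1)^(1 + deg γ) • (γ ⌟ (a ∧ b))`. -/
theorem contraction_derivation_formula (R : Type*) [CommRing R]
    (F : Type*) [AddCommGroup F] [Module R F] [Module.Free R F] [Module.Finite R F]
    (a : F) (γ : ExteriorAlgebra R (Module.Dual R F)) (b : ExteriorAlgebra R F)
    (j i : ℕ) (hγ : extDeg R j γ) (hb : extDeg R i b) :
    extContract R (extContractD R (ExteriorAlgebra.ι R a) γ) b =
      ExteriorAlgebra.ι R a * extContract R γ b +
        ((-1 : R) ^ (1 + j)) • extContract R γ (ExteriorAlgebra.ι R a * b) := by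
  clear hb
  have hD : extContractD R (ExteriorAlgebra.ι R a) =
      CliffordAlgebra.contractLeft (Q := (0 : QuadraticForm R (Module.Dual R F)))
        (Module.Dual.eval R F a) := by
    simp [extContractD, ExteriorAlgebra.lift_ι_apply]
  have hC : ∀ f : Module.Dual R F, extContract R (ExteriorAlgebra.ι R f) =
      CliffordAlgebra.contractLeft (Q := (0 : QuadraticForm R F)) f := fun f => by
    simp [extContract, ExteriorAlgebra.lift_ι_apply]
  rw [hD]
  induction j generalizing γ with
  | zero =>
    rw [extDeg, pow_zero, Submodule.mem_one] at hγ
    obtain ⟨r, rfl⟩ := hγ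
    rw [CliffordAlgebra.contractLeft_algebraMap, map_zero, AlgHom.commutes,
      Module.algebraMap_end_apply, Module.algebraMap_end_apply]
    simp [mul_smul_comm]
  | succ j ih =>
    rw [extDeg, pow_succ'] at hγ
    refine Submodule.mul_induction_on hγ ?_ ?_
    · rintro x ⟨f, rfl⟩ γ' hγ'
      have key := ih γ' hγ'
      have h1 : (CliffordAlgebra.contractLeft (Q := (0 : QuadraticForm R (Module.Dual R F)))
            (Module.Dual.eval R F a)) (ExteriorAlgebra.ι R f * γ') =
          f a • γ' - ExteriorAlgebra.ι R f *
            ((CliffordAlgebra.contractLeft (Module.Dual.eval R F a)) γ') :=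
        CliffordAlgebra.contractLeft_ι_mul _ _ _
      have h2 : ∀ (δ : ExteriorAlgebra R (Module.Dual R F)) (z : ExteriorAlgebra R F),
          extContract R (ExteriorAlgebra.ι R f * δ) z =
            CliffordAlgebra.contractLeft (Q := (0 : QuadraticForm R F)) f
              (extContract R δ z) := by
        intro δ z
        rw [map_mul, hC, Module.End.mul_apply]
      have h3 : ∀ z : ExteriorAlgebra R F,
          CliffordAlgebra.contractLeft (Q := (0 : QuadraticForm R F)) f
            (ExteriorAlgebra.ι R a * z) = f a • z - ExteriorAlgebra.ι R a *
              (CliffordAlgebra.contractLeft (Q := (0 : QuadraticForm R F)) f z) :=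
        fun z => CliffordAlgebra.contractLeft_ι_mul _ _ _
      rw [h1, map_sub, LinearMap.sub_apply, map_smul, LinearMap.smul_apply]
      simp only [h2]
      rw [key, map_add, map_smul, h3, show 1 + (j + 1) = (1 + j) + 1 from rfl, pow_succ,
        mul_neg_one, neg_smul]
      abel
    · intro x y hx hy
      rw [map_add, map_add, LinearMap.add_apply, map_add, LinearMap.add_apply,
        LinearMap.add_apply, hx, hy, mul_add, smul_add]
      abel
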